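/- With f⋆ = min f on the torus, c ∈ ℝ, g a nonnegative periodic function, u = f − c − g, λ̂ a strictly positive probability distribution on ℤᵈ, and Ŝ = (1/N)Σ_{i=1}^N |û_{ω_i}|/λ̂_{ω_i} for i.i.d. samples ω_i ∼ λ̂, we have with probability at least 1−δ: f⋆ ≥ c − Ŝ − ‖f − c − g‖_{H_λ}/√(Nδ). -/

import Mathlib

open scoped BigOperators ProbabilityTheory
open MeasureTheory

open scoped ENNReal NNReal

/-- certificate with Chebyshev's inequality. With `f⋆ = min f`, `c ∈ ℝ`, `g ≥ 0`
periodic, `u = f - c - g`, `λ̂` a strictly positive probability distribution on `ℤᵈ` and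
`Ŝ = (1/N) Σᵢ |û_{ωᵢ}|/λ̂_{ωᵢ}` with `ωᵢ ∼ λ̂` i.i.d., with probability at least `1 - δ`:
`f⋆ ≥ c - Ŝ - ‖f - c - g‖_{H_λ}/√(Nδ)`. -/
theorem stmt5 {d : ℕ} (f : (Fin d → ℝ) → ℝ) (fc : (Fin d → ℤ) → ℂ)
    (hf : ∀ x, (f x : ℂ) = ∑' ω : Fin d → ℤ, fc ω *
      Complex.exp (2 * Real.pi * Complex.I * ∑ i, (ω i : ℂ) * (x i : ℂ)))
    (hfsum : Summable fun ω => ‖fc ω‖)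
    (g : (Fin d → ℝ) → ℝ) (gc : (Fin d → ℤ) → ℂ)
    (hg : ∀ x, (g x : ℂ) = ∑' ω : Fin d → ℤ, gc ω *
      Complex.exp (2 * Real.pi * Complex.I * ∑ i, (ω i : ℂ) * (x i : ℂ)))
    (hgsum : Summable fun ω => ‖gc ω‖)
    (hgnonneg : ∀ x, 0 ≤ g x)
    (c : ℝ) (xstar : Fin d → ℝ) (hmin : ∀ x, f xstar ≤ f x)
    (lam : (Fin d → ℤ) → ℝ) (hpos : ∀ s, 0 < lam s) (hprob : ∑' s, lam s = 1)
    (uc : (Fin d → ℤ) → ℂ)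
    (huc : uc = fun ω => fc ω - (if ω = 0 then (c : ℂ) else 0) - gc ω)
    (hHsum : Summable fun s => ‖uc s‖ ^ 2 / lam s)
    {Ω : Type} [MeasureSpace Ω] [IsProbabilityMeasure (ℙ : Measure Ω)]
    (N : ℕ) (hN : 0 < N) (W : Fin N → Ω → (Fin d → ℤ))
    (hmeas : ∀ i, Measurable (W i))
    (hindep : ProbabilityTheory.iIndepFun W ℙ)
    (hlaw : ∀ i s, ℙ (W i ⁻¹' {s}) = ENNReal.ofReal (lam s))
    (δ : ℝ) (hδ : δ ∈ Set.Ioo (0:ℝ) 1) :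
    ENNReal.ofReal (1 - δ) ≤
      ℙ {a | c - (1 / (N : ℝ)) * (∑ i, ‖uc (W i a)‖ / lam (W i a))
        - Real.sqrt (∑' s, ‖uc s‖ ^ 2 / lam s) / Real.sqrt (N * δ) ≤ f xstar} := by
  classical
  obtain ⟨hδ0, hδ1⟩ := hδ
  have hN' : (0:ℝ) < N := by exact_mod_cast hN
  set H : ℝ := ∑' s, ‖uc s‖ ^ 2 / lam s with hHdef
  have hHnn : 0 ≤ H := tsum_nonneg fun s => div_nonneg (sq_nonneg _) (hpos s).le
  -- summability of lam
  have hlamsum : Summable lam := by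
    by_contra h
    rw [tsum_eq_zero_of_not_summable h] at hprob
    norm_num at hprob
  -- summability of ‖uc ·‖
  have hucsum : Summable fun s => ‖uc s‖ := by
    refine Summable.of_nonneg_of_le (fun s => norm_nonneg _) (fun s => ?_)
      ((hHsum.add hlamsum).div_const 2)
    have h1 := hpos s
    rw [le_div_iff₀ (by norm_num : (0:ℝ) < 2), div_add' _ _ _ h1.ne', le_div_iff₀ h1]
    nlinarith [sq_nonneg (‖uc s‖ - lam s)]
  set μ0 : ℝ := ∑' s, ‖uc s‖ with hμ0def
  -- deterministic lower bound : c - μ0 ≤ f xstar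
  have hdet : c - μ0 ≤ f xstar := by
    set E : (Fin d → ℤ) → ℂ := fun ω =>
      Complex.exp (2 * Real.pi * Complex.I * ∑ i, (ω i : ℂ) * (xstar i : ℂ)) with hEdef
    have hEr : ∀ ω : Fin d → ℤ,
        Complex.exp (2 * Real.pi * Complex.I * ∑ i, (ω i : ℂ) * (xstar i : ℂ)) = E ω :=
      fun ω => rfl
    have henorm : ∀ ω, ‖E ω‖ = 1 := by
      intro ω
      have hz : (2 * (Real.pi:ℂ) * Complex.I * ∑ i, (ω i : ℂ) * (xstar i : ℂ))
          = ((2 * Real.pi * ∑ i, (ω i : ℝ) * xstar i : ℝ) : ℂ) * Complex.I := by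
        push_cast
        ring
      rw [hEdef]
      simp only []
      rw [hz]
      exact Complex.norm_exp_ofReal_mul_I _
    have hse : Summable fun ω => uc ω * E ω := by
      apply Summable.of_norm
      have : (fun ω => ‖uc ω * E ω‖) = fun ω => ‖uc ω‖ := by
        funext ω; rw [norm_mul, henorm, mul_one]
      rw [this]; exact hucsum
    have hge : Summable fun ω => gc ω * E ω := by
      apply Summable.of_norm
      have : (fun ω => ‖gc ω * E ω‖) = fun ω => ‖gc ω‖ := by
        funext ω; rw [norm_mul, henorm, mul_one]
      rw [this]; exact hgsum
    have hifun : (fun ω : Fin d → ℤ => (if ω = 0 then (c:ℂ) else 0) * E ω)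
        = fun ω => if ω = 0 then (c:ℂ) * E 0 else 0 := by
      funext ω; by_cases h : ω = 0 <;> simp [h]
    have hie : Summable fun ω : Fin d → ℤ => (if ω = 0 then (c:ℂ) else 0) * E ω := by
      rw [hifun]
      exact summable_of_ne_finset_zero (s := {0}) (by intro b hb; simp only [Finset.mem_singleton] at hb; simp [hb])
    have hE0 : E 0 = 1 := by
      rw [hEdef]; simp
    have hfx : (f xstar : ℂ) = (∑' ω, uc ω * E ω) + (c:ℂ) + (g xstar : ℂ) := by
      have h1 := hf xstar
      have h2 := hg xstar
      simp only [hEr] at h1 h2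
      rw [h1]
      have hfceq : ∀ ω, fc ω * E ω
          = uc ω * E ω + (if ω = 0 then (c:ℂ) else 0) * E ω + gc ω * E ω := by
        intro ω; simp only [huc]; ring
      calc ∑' ω, fc ω * E ω
          = ∑' ω, (uc ω * E ω + (if ω = 0 then (c:ℂ) else 0) * E ω + gc ω * E ω) :=
            tsum_congr hfceq
        _ = (∑' ω, uc ω * E ω) + (∑' ω, (if ω = 0 then (c:ℂ) else 0) * E ω)
              + ∑' ω, gc ω * E ω := by
            rw [Summable.tsum_add (hse.add hie) hge, Summable.tsum_add hse hie]
        _ = (∑' ω, uc ω * E ω) + (c:ℂ) + (g xstar : ℂ) := by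
            rw [hifun, tsum_ite_eq, hE0, mul_one, h2]
    have h3 : f xstar = (∑' ω, uc ω * E ω).re + c + g xstar := by
      have := congrArg Complex.re hfx
      simpa using this
    have h4 : |(∑' ω, uc ω * E ω).re| ≤ μ0 := by
      have hsen : Summable fun ω => ‖uc ω * E ω‖ := by
        have : (fun ω => ‖uc ω * E ω‖) = fun ω => ‖uc ω‖ := by
          funext ω; rw [norm_mul, henorm, mul_one]
        rw [this]; exact hucsum
      calc |(∑' ω, uc ω * E ω).re| ≤ ‖∑' ω, uc ω * E ω‖ := by
            exact Complex.abs_re_le_norm _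
        _ ≤ ∑' ω, ‖uc ω * E ω‖ := norm_tsum_le_tsum_norm hsen
        _ = μ0 := by
            rw [hμ0def]
            exact tsum_congr fun ω => by rw [norm_mul, henorm, mul_one]
    have := abs_le.1 h4
    have := hgnonneg xstar
    linarith [h3, this]
  -- the sampled function
  set φ : (Fin d → ℤ) → ℝ := fun s => ‖uc s‖ / lam s with hφdef
  have hφm : Measurable φ := measurable_of_countable φ
  have hmapsing : ∀ i s, (Measure.map (W i) ℙ) {s} = ENNReal.ofReal (lam s) := by
    intro i s
    rw [Measure.map_apply (hmeas i) (measurableSet_singleton s)]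
    exact hlaw i s
  have hφsq : ∀ s, φ s ^ 2 * lam s = ‖uc s‖ ^ 2 / lam s := by
    intro s
    have := (hpos s).ne'
    rw [hφdef]
    field_simp
  have hmemν : ∀ i, MemLp φ 2 (Measure.map (W i) ℙ) := by
    intro i
    refine ⟨hφm.aestronglyMeasurable, ?_⟩
    rw [eLpNorm_eq_lintegral_rpow_enorm_toReal two_ne_zero ENNReal.ofNat_ne_top]
    refine ENNReal.rpow_lt_top_of_nonneg (by norm_num) ?_
    have hlint : ∫⁻ s, (‖φ s‖ₑ : ℝ≥0∞) ^ (2:ℝ≥0∞).toReal ∂(Measure.map (W i) ℙ)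
        = ENNReal.ofReal H := by
      rw [lintegral_countable']
      have hterm : ∀ s : Fin d → ℤ, (‖φ s‖ₑ : ℝ≥0∞) ^ (2:ℝ≥0∞).toReal
          * (Measure.map (W i) ℙ) {s} = ENNReal.ofReal (‖uc s‖ ^ 2 / lam s) := by
        intro s
        rw [hmapsing i s, ← hφsq s]
        have hφnn : 0 ≤ φ s := div_nonneg (norm_nonneg _) (hpos s).le
        rw [Real.enorm_eq_ofReal hφnn]
        rw [ENNReal.ofReal_mul (by positivity), ENNReal.ofReal_pow hφnn]
        norm_num
      rw [tsum_congr hterm]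
      rw [← ENNReal.ofReal_tsum_of_nonneg (fun s => div_nonneg (sq_nonneg _) (hpos s).le) hHsum]
    rw [hlint]
    exact ENNReal.ofReal_ne_top
  have hmemX : ∀ i, MemLp (fun a => φ (W i a)) 2 ℙ := fun i =>
    (memLp_map_measure_iff hφm.aestronglyMeasurable (hmeas i).aemeasurable).1 (hmemν i)
  have hintφ : ∀ i, Integrable φ (Measure.map (W i) ℙ) := fun i =>
    (hmemν i).integrable one_le_two
  have hEX : ∀ i, ∫ a, φ (W i a) ∂ℙ = μ0 := by
    intro i
    rw [← integral_map (hmeas i).aemeasurable hφm.aestronglyMeasurable,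
      integral_countable' (hintφ i), hμ0def]
    refine tsum_congr fun s => ?_
    rw [measureReal_def, hmapsing i s, ENNReal.toReal_ofReal (hpos s).le, smul_eq_mul, hφdef]
    rw [mul_comm]
    exact div_mul_cancel₀ _ (hpos s).ne'
  have hEX2 : ∀ i, ∫ a, φ (W i a) ^ 2 ∂ℙ = H := by
    intro i
    have hint2 : Integrable (fun s => φ s ^ 2) (Measure.map (W i) ℙ) := (hmemν i).integrable_sq
    have := integral_map (μ := ℙ) (hmeas i).aemeasurable
      (f := fun s => φ s ^ 2) (measurable_of_countable _).aestronglyMeasurable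
    rw [← this, integral_countable' hint2, hHdef]
    refine tsum_congr fun s => ?_
    rw [measureReal_def, hmapsing i s, ENNReal.toReal_ofReal (hpos s).le, smul_eq_mul, mul_comm]
    exact hφsq s
  have hvar : ∀ i, ProbabilityTheory.variance (fun a => φ (W i a)) ℙ ≤ H := by
    intro i
    rw [ProbabilityTheory.variance_eq_sub (hmemX i)]
    have h2 : ∫ a, ((fun a => φ (W i a)) ^ 2) a ∂ℙ = H := by
      simp only [Pi.pow_apply]
      exact hEX2 i
    rw [h2]
    nlinarith [sq_nonneg (∫ a, φ (W i a) ∂ℙ)]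
  -- the sum
  set T : Ω → ℝ := ∑ i : Fin N, (fun a => φ (W i a)) with hTdef
  have hTa : ∀ a, T a = ∑ i, φ (W i a) := by
    intro a; rw [hTdef]; simp [Finset.sum_apply]
  have hTm : Measurable T := by
    have hfun : T = fun a => ∑ i, φ (W i a) := funext hTa
    rw [hfun]
    exact Finset.measurable_sum _ fun i _ => hφm.comp (hmeas i)
  have hmemT : MemLp T 2 ℙ := memLp_finset_sum' _ fun i _ => hmemX i
  have hpair : Set.Pairwise ↑(Finset.univ : Finset (Fin N))
      fun i j => ProbabilityTheory.IndepFun (fun a => φ (W i a)) (fun a => φ (W j a)) ℙ := by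
    intro i _ j _ hij
    exact (hindep.indepFun hij).comp hφm hφm
  have hvarT : ProbabilityTheory.variance T ℙ ≤ N * H := by
    rw [hTdef, ProbabilityTheory.IndepFun.variance_sum (fun i _ => hmemX i) hpair]
    calc ∑ i : Fin N, ProbabilityTheory.variance (fun a => φ (W i a)) ℙ
        ≤ ∑ _i : Fin N, H := Finset.sum_le_sum fun i _ => hvar i
      _ = N * H := by simp [Finset.sum_const, nsmul_eq_mul]
  have hET : ∫ a, T a ∂ℙ = N * μ0 := by
    have h1 : ∫ a, T a ∂ℙ = ∑ i : Fin N, ∫ a, φ (W i a) ∂ℙ := by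
      simp only [hTa]
      exact integral_finset_sum _ fun i _ => (hmemX i).integrable one_le_two
    rw [h1]
    simp [hEX, Finset.sum_const, nsmul_eq_mul]
  -- case split on H = 0
  rcases eq_or_lt_of_le hHnn with hH0 | hHpos
  · -- H = 0 : everything is deterministic
    have hzero : ∀ s, ‖uc s‖ = 0 := by
      intro s
      have hle := Summable.le_tsum hHsum s fun s' _ => div_nonneg (sq_nonneg _) (hpos s').le
      rw [← hHdef, ← hH0] at hle
      have hnn : 0 ≤ ‖uc s‖ ^ 2 / lam s := div_nonneg (sq_nonneg _) (hpos s).le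
      have : ‖uc s‖ ^ 2 / lam s = 0 := le_antisymm hle hnn
      have := (div_eq_zero_iff.1 this).resolve_right (hpos s).ne'
      exact pow_eq_zero_iff (n := 2) (by norm_num) |>.1 this
    have hμ00 : μ0 = 0 := by
      rw [hμ0def]
      have : (fun s => ‖uc s‖) = fun _ => (0:ℝ) := funext hzero
      rw [this, tsum_zero]
    have hset : {a : Ω | c - (1 / (N : ℝ)) * (∑ i, ‖uc (W i a)‖ / lam (W i a))
        - Real.sqrt H / Real.sqrt (N * δ) ≤ f xstar} = Set.univ := by
      ext a
      simp only [Set.mem_setOf_eq, Set.mem_univ, iff_true]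
      have hsum0 : ∑ i, ‖uc (W i a)‖ / lam (W i a) = 0 :=
        Finset.sum_eq_zero fun i _ => by rw [hzero, zero_div]
      rw [hsum0, ← hH0, Real.sqrt_zero, zero_div, mul_zero, sub_zero, sub_zero]
      linarith [hdet, hμ00]
    rw [hset]
    simp only [measure_univ]
    exact ENNReal.ofReal_le_one.2 (by linarith)
  · -- H > 0 : Chebyshev
    set t : ℝ := Real.sqrt H / Real.sqrt (N * δ) with htdef
    have hNδ : (0:ℝ) < N * δ := by positivity
    have ht : 0 < t := div_pos (Real.sqrt_pos.2 hHpos) (Real.sqrt_pos.2 hNδ)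
    have hts : t ^ 2 = H / (N * δ) := by
      rw [htdef, div_pow, Real.sq_sqrt hHnn, Real.sq_sqrt hNδ.le]
    have hcheb := ProbabilityTheory.meas_ge_le_variance_div_sq (μ := ℙ) hmemT
      (mul_pos hN' ht)
    have hratio : ProbabilityTheory.variance T ℙ / ((N:ℝ) * t) ^ 2 ≤ δ := by
      rw [div_le_iff₀ (by positivity)]
      calc ProbabilityTheory.variance T ℙ ≤ N * H := hvarT
        _ = δ * ((N:ℝ) * t) ^ 2 := by
            rw [mul_pow, hts]
            field_simp
    have hbadle : ℙ {a | (N:ℝ) * t ≤ |T a - ∫ x, T x ∂ℙ|} ≤ ENNReal.ofReal δ := by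
      refine hcheb.trans ?_
      exact ENNReal.ofReal_le_ofReal hratio
    have hbadmeas : MeasurableSet {a | (N:ℝ) * t ≤ |T a - ∫ x, T x ∂ℙ|} :=
      measurableSet_le measurable_const ((hTm.sub measurable_const).abs)
    have hsub : {a | (N:ℝ) * t ≤ |T a - ∫ x, T x ∂ℙ|}ᶜ ⊆
        {a : Ω | c - (1 / (N : ℝ)) * (∑ i, ‖uc (W i a)‖ / lam (W i a))
          - Real.sqrt H / Real.sqrt (N * δ) ≤ f xstar} := by
      intro a ha
      simp only [Set.mem_compl_iff, Set.mem_setOf_eq, not_le] at ha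
      rw [hET] at ha
      have h6 : (N:ℝ) * μ0 - N * t ≤ T a := by
        have := abs_lt.1 ha
        linarith [this.1]
      have hTa' : T a = ∑ i, ‖uc (W i a)‖ / lam (W i a) := by
        rw [hTa a]
      rw [Set.mem_setOf_eq, ← hTa', ← htdef]
      have h7 : μ0 - t ≤ (1 / (N:ℝ)) * T a := by
        have hmul := mul_le_mul_of_nonneg_left h6 (le_of_lt (by positivity : (0:ℝ) < 1 / N))
        have hkey : (1 / (N:ℝ)) * ((N:ℝ) * μ0 - N * t) = μ0 - t := by
          field_simp
        linarith [hmul, hkey.symm.le]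
      linarith [hdet, h7]
    calc ENNReal.ofReal (1 - δ) = 1 - ENNReal.ofReal δ := by
          rw [ENNReal.ofReal_sub _ hδ0.le, ENNReal.ofReal_one]
      _ ≤ 1 - ℙ {a | (N:ℝ) * t ≤ |T a - ∫ x, T x ∂ℙ|} := tsub_le_tsub_left hbadle 1
      _ = ℙ ({a | (N:ℝ) * t ≤ |T a - ∫ x, T x ∂ℙ|}ᶜ) := (prob_compl_eq_one_sub hbadmeas).symm
      _ ≤ _ := measure_mono hsub
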